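/- Let n ≥ 2 be an integer and q a nonzero complex number. The set of unordered pairs {z₁, z₂} of complex numbers satisfying z₁·z₂ ≠ 0, z₁ ≠ z₂, z₁ ≠ −z₂, and z₁^{2n} = z₂^{2n} = −q·(z₁ + z₂) has exactly (n−1)(2n−1) elements. -/

import Mathlib

open Polynomial

noncomputable def rootsF (k : ℕ) (c : ℂ) : Finset ℂ := (Polynomial.nthRoots k c).toFinset

lemma mem_rootsF {k : ℕ} (hk : 0 < k) {c z : ℂ} : z ∈ rootsF k c ↔ z ^ k = c := by
  simp [rootsF, Polynomial.mem_nthRoots hk]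

lemma card_rootsF {k : ℕ} (hk : 0 < k) {c : ℂ} (hc : c ≠ 0) : (rootsF k c).card = k := by
  have hprim := Complex.isPrimitiveRoot_exp k hk.ne'
  have hnodup := hprim.nthRoots_nodup (a := c) hc
  rw [rootsF, Multiset.toFinset_card_of_nodup hnodup, hprim.card_nthRoots,
    if_pos (IsAlgClosed.exists_pow_nat_eq c hk)]

/-- The finset of ordered solutions. -/
noncomputable def Ford (n : ℕ) (q : ℂ) : Finset (ℂ × ℂ) :=
  ((Polynomial.nthRootsFinset (2 * n) (1 : ℂ)) \ {1, -1}).biUnion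
    (fun ζ => (rootsF (2 * n - 1) (-q * (1 + ζ))).image (fun z => (z, ζ * z)))

lemma cval_ne {q : ℂ} (hq : q ≠ 0) {ζ : ℂ} (hζ : ζ ≠ -1) : -q * (1 + ζ) ≠ 0 := by
  have h1 : (1 : ℂ) + ζ ≠ 0 := fun h => hζ (by linear_combination h)
  exact mul_ne_zero (neg_ne_zero.2 hq) h1

lemma mem_Ford {n : ℕ} (hn : 2 ≤ n) {q : ℂ} (hq : q ≠ 0) (p : ℂ × ℂ) :
    p ∈ Ford n q ↔ p.1 * p.2 ≠ 0 ∧ p.1 ≠ p.2 ∧ p.1 ≠ -p.2 ∧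
      p.1 ^ (2 * n) = -q * (p.1 + p.2) ∧ p.2 ^ (2 * n) = -q * (p.1 + p.2) := by
  obtain ⟨z₁, z₂⟩ := p
  have hm : 0 < 2 * n := by omega
  have hm1 : 0 < 2 * n - 1 := by omega
  have hsucc : 2 * n - 1 + 1 = 2 * n := by omega
  simp only [Ford, Finset.mem_biUnion, Finset.mem_image, Finset.mem_sdiff,
    Finset.mem_insert, Finset.mem_singleton, Polynomial.mem_nthRootsFinset hm]
  constructor
  · rintro ⟨ζ, ⟨hζm, hζ⟩, z, hz, h⟩
    push_neg at hζ
    obtain ⟨hζ1, hζn1⟩ := hζ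
    rw [mem_rootsF hm1] at hz
    rw [Prod.mk.injEq] at h
    obtain ⟨rfl, rfl⟩ := h
    have hc : -q * (1 + ζ) ≠ 0 := cval_ne hq hζn1
    have hz0 : z ≠ 0 := by
      intro h; rw [h, zero_pow hm1.ne'] at hz; exact hc hz.symm
    have hζ0 : ζ ≠ 0 := by
      intro h; rw [h, zero_pow hm.ne'] at hζm; exact zero_ne_one hζm
    have hzm : z ^ (2 * n) = -q * (z + ζ * z) := by
      have : z ^ (2 * n) = z ^ (2 * n - 1) * z := by rw [← pow_succ, hsucc]
      rw [this, hz]; ring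
    refine ⟨mul_ne_zero hz0 (mul_ne_zero hζ0 hz0), ?_, ?_, hzm, ?_⟩
    · intro h
      exact hζ1 (mul_right_cancel₀ hz0 (by rw [one_mul, ← h])).symm
    · intro h
      exact hζn1 (mul_right_cancel₀ hz0 (show (-1 : ℂ) * z = ζ * z by linear_combination -h)).symm
    · rw [mul_pow, hζm, one_mul, hzm]
  · rintro ⟨hprod, hne, hnne, h1, h2⟩
    have hz₁ : z₁ ≠ 0 := fun h => hprod (by rw [h, zero_mul])
    have hz₂ : z₂ ≠ 0 := fun h => hprod (by rw [h, mul_zero])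
    refine ⟨z₂ / z₁, ⟨?_, ?_⟩, z₁, ?_, ?_⟩
    · rw [div_pow, h2, ← h1, div_self (pow_ne_zero _ hz₁)]
    · push_neg
      constructor
      · intro h
        exact hne ((div_eq_one_iff_eq hz₁).1 h).symm
      · intro h
        have : z₂ = -z₁ := by
          rw [div_eq_iff hz₁] at h
          rw [h]; ring
        exact hnne (by rw [this, neg_neg])
    · rw [mem_rootsF hm1]
      apply mul_right_cancel₀ hz₁
      rw [← pow_succ, hsucc, h1]
      field_simp
    · rw [Prod.mk.injEq]
      exact ⟨rfl, div_mul_cancel₀ _ hz₁⟩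

lemma swap_mem_Ford {n : ℕ} (hn : 2 ≤ n) {q : ℂ} (hq : q ≠ 0) {p : ℂ × ℂ}
    (hp : p ∈ Ford n q) : p.swap ∈ Ford n q := by
  rw [mem_Ford hn hq] at hp ⊢
  obtain ⟨h0, h1, h2, h3, h4⟩ := hp
  refine ⟨by rwa [Prod.fst_swap, Prod.snd_swap, mul_comm], ?_, ?_, ?_, ?_⟩
  · simpa [Prod.fst_swap, Prod.snd_swap, eq_comm] using h1
  · simp only [Prod.fst_swap, Prod.snd_swap]
    intro h; exact h2 (by rw [h, neg_neg])
  · rwa [Prod.fst_swap, Prod.snd_swap, add_comm]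
  · rwa [Prod.fst_swap, Prod.snd_swap, add_comm]

lemma card_Ford {n : ℕ} (hn : 2 ≤ n) {q : ℂ} (hq : q ≠ 0) :
    (Ford n q).card = (2 * n - 2) * (2 * n - 1) := by
  classical
  have hm : 0 < 2 * n := by omega
  have hm1 : 0 < 2 * n - 1 := by omega
  have hprim := Complex.isPrimitiveRoot_exp (2 * n) hm.ne'
  have hζne : ∀ ζ ∈ (Polynomial.nthRootsFinset (2 * n) (1 : ℂ)) \ {1, -1}, -q * (1 + ζ) ≠ 0 := by
    intro ζ hζ
    simp only [Finset.mem_sdiff, Finset.mem_insert, Finset.mem_singleton] at hζ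
    push_neg at hζ
    exact cval_ne hq hζ.2.2
  rw [Ford, Finset.card_biUnion]
  · have : ∀ ζ ∈ (Polynomial.nthRootsFinset (2 * n) (1 : ℂ)) \ {1, -1},
        ((rootsF (2 * n - 1) (-q * (1 + ζ))).image (fun z => (z, ζ * z))).card = 2 * n - 1 := by
      intro ζ hζ
      rw [Finset.card_image_of_injective _ (fun a b h => congrArg Prod.fst h),
        card_rootsF hm1 (hζne ζ hζ)]
    rw [Finset.sum_congr rfl this, Finset.sum_const, smul_eq_mul]
    congr 1
    have hsub : ({1, -1} : Finset ℂ) ⊆ Polynomial.nthRootsFinset (2 * n) (1 : ℂ) := by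
      intro x hx
      simp only [Finset.mem_insert, Finset.mem_singleton] at hx
      rcases hx with rfl | rfl
      · exact Polynomial.one_mem_nthRootsFinset hm
      · rw [Polynomial.mem_nthRootsFinset hm, pow_mul]; norm_num
    rw [Finset.card_sdiff_of_subset hsub, hprim.card_nthRootsFinset]
    have : ({1, -1} : Finset ℂ).card = 2 := by
      rw [Finset.card_insert_of_notMem (by norm_num), Finset.card_singleton]
    rw [this]
  · intro ζ hζ ζ' hζ' hne
    simp only [Finset.disjoint_left, Finset.mem_image]
    rintro p ⟨z, hz, rfl⟩ ⟨z', hz', he⟩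
    rw [Prod.mk.injEq] at he
    obtain ⟨rfl, he2⟩ := he
    have hz0 : z' ≠ 0 := by
      rw [mem_rootsF hm1] at hz
      intro h; rw [h, zero_pow hm1.ne'] at hz
      exact hζne ζ hζ hz.symm
    exact hne (mul_right_cancel₀ hz0 he2).symm

lemma pair_eq_cases {a b c d : ℂ} (h : ({a, b} : Finset ℂ) = {c, d}) (hab : a ≠ b) :
    (a = c ∧ b = d) ∨ (a = d ∧ b = c) := by
  have ha : a ∈ ({c, d} : Finset ℂ) := h ▸ Finset.mem_insert_self a {b}
  have hb : b ∈ ({c, d} : Finset ℂ) := h ▸ Finset.mem_insert_of_mem (Finset.mem_singleton_self b)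
  simp only [Finset.mem_insert, Finset.mem_singleton] at ha hb
  rcases ha with h1 | h1 <;> rcases hb with h2 | h2
  · exact absurd (h1.trans h2.symm) hab
  · exact Or.inl ⟨h1, h2⟩
  · exact Or.inr ⟨h1, h2⟩
  · exact absurd (h1.trans h2.symm) hab

/-- for n ≥ 2 and q ≠ 0, the number of unordered pairs {z₁, z₂} of nonzero
complex numbers with z₁ ≠ ±z₂ and z₁^{2n} = z₂^{2n} = −q(z₁+z₂) is (n−1)(2n−1). -/
theorem stmt_16 (n : ℕ) (hn : 2 ≤ n) (q : ℂ) (hq : q ≠ 0) :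
    Set.ncard {P : Finset ℂ | ∃ z₁ z₂ : ℂ, P = {z₁, z₂} ∧ z₁ * z₂ ≠ 0 ∧ z₁ ≠ z₂ ∧
        z₁ ≠ -z₂ ∧ z₁ ^ (2 * n) = -q * (z₁ + z₂) ∧ z₂ ^ (2 * n) = -q * (z₁ + z₂)} =
      (n - 1) * (2 * n - 1) := by
  classical
  set f : ℂ × ℂ → Finset ℂ := fun p => ({p.1, p.2} : Finset ℂ) with hf
  have hSet : {P : Finset ℂ | ∃ z₁ z₂ : ℂ, P = {z₁, z₂} ∧ z₁ * z₂ ≠ 0 ∧ z₁ ≠ z₂ ∧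
      z₁ ≠ -z₂ ∧ z₁ ^ (2 * n) = -q * (z₁ + z₂) ∧ z₂ ^ (2 * n) = -q * (z₁ + z₂)}
      = ↑((Ford n q).image f) := by
    ext P
    simp only [Set.mem_setOf_eq, Finset.coe_image, Set.mem_image, Finset.mem_coe]
    constructor
    · rintro ⟨z₁, z₂, rfl, h0, h1, h2, h3, h4⟩
      exact ⟨(z₁, z₂), (mem_Ford hn hq (z₁, z₂)).2 ⟨h0, h1, h2, h3, h4⟩, rfl⟩
    · rintro ⟨p, hp, rfl⟩
      obtain ⟨h0, h1, h2, h3, h4⟩ := (mem_Ford hn hq p).1 hp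
      exact ⟨p.1, p.2, rfl, h0, h1, h2, h3, h4⟩
  rw [hSet, Set.ncard_coe_finset]
  have hfib : ∀ P ∈ (Ford n q).image f,
      ((Ford n q).filter (fun p => f p = P)).card = 2 := by
    intro P hP
    obtain ⟨p, hp, rfl⟩ := Finset.mem_image.1 hP
    have hpne : p.1 ≠ p.2 := ((mem_Ford hn hq p).1 hp).2.1
    have hfilt : (Ford n q).filter (fun r => f r = f p) = {p, p.swap} := by
      ext r
      simp only [Finset.mem_filter, Finset.mem_insert, Finset.mem_singleton]
      constructor
      · rintro ⟨hr, hfr⟩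
        have hrne : r.1 ≠ r.2 := ((mem_Ford hn hq r).1 hr).2.1
        rcases pair_eq_cases hfr hrne with ⟨e1, e2⟩ | ⟨e1, e2⟩
        · exact Or.inl (Prod.ext e1 e2)
        · exact Or.inr (Prod.ext e1 e2)
      · rintro (rfl | rfl)
        · exact ⟨hp, rfl⟩
        · refine ⟨swap_mem_Ford hn hq hp, ?_⟩
          simp only [hf, Prod.fst_swap, Prod.snd_swap]
          exact Finset.pair_comm _ _
    rw [hfilt, Finset.card_insert_of_notMem, Finset.card_singleton]
    rw [Finset.mem_singleton]
    intro h
    exact hpne (congrArg Prod.fst h)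
  have hkey : (Ford n q).card = ((Ford n q).image f).card * 2 := by
    rw [Finset.card_eq_sum_card_fiberwise
      (fun p hp => Finset.mem_image_of_mem f hp),
      Finset.sum_congr rfl hfib, Finset.sum_const, smul_eq_mul]
  have h2 : ((Ford n q).image f).card * 2 = (2 * n - 2) * (2 * n - 1) := by
    rw [← hkey, card_Ford hn hq]
  have harith : (2 * n - 2) * (2 * n - 1) = ((n - 1) * (2 * n - 1)) * 2 := by
    have h1 : 2 * n - 2 = (n - 1) * 2 := by omega
    rw [h1]; ring
  omega
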